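/- arXiv:2502.19408 — 2 statements merged into one kernel-verified Lean document; each statement's English description precedes it below -/
import Mathlib

section
/- Let f = 1 + ∑_{k≥1} f_k x^k be a formal power series with complex coefficients and constant term 1. Then the following identity of formal power series in z holds: exp(∑_{k≥1} (1/k)·([x^k] f^k)·z^k) = ∑_{k≥1} (1/k)·([x^{k−1}] f^k)·z^{k−1}. -/
open PowerSeries Finset

/-- The formal exponential `exp(G) = ∑_{j≥0} G^j / j!` of a power series `G` with zero
constant term; the `j`-sum is truncated at `j = n` when computing the coefficient of `x^n`,
which is valid since `G` has zero constant term. -/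
noncomputable def formalExp (G : PowerSeries ℂ) : PowerSeries ℂ :=
  PowerSeries.mk fun n =>
    ∑ j ∈ Finset.range (n + 1), PowerSeries.coeff n (G ^ j) / (j.factorial : ℂ)


noncomputable section

namespace LagrangeAux

/-- Substitution of `w` (with zero constant term) into `f`, defined coefficientwise. -/
def SUB (w f : PowerSeries ℂ) : PowerSeries ℂ :=
  PowerSeries.mk fun n => ∑ k ∈ Finset.range (n + 1),
    PowerSeries.coeff k f * PowerSeries.coeff n (w ^ k)

lemma coeff_SUB (w f : PowerSeries ℂ) (n : ℕ) :
    coeff n (SUB w f) = ∑ k ∈ range (n + 1), coeff k f * coeff n (w ^ k) :=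
  coeff_mk _ _

variable {w : PowerSeries ℂ}

lemma coeff_pow_eq_zero (hw : constantCoeff w = 0) {a k : ℕ} (h : a < k) :
    coeff a (w ^ k) = 0 :=
  PowerSeries.X_pow_dvd_iff.mp (pow_dvd_pow_of_dvd (PowerSeries.X_dvd_iff.mpr hw) k) a h

lemma coeff_pow_mul_eq_zero (hw : constantCoeff w = 0) {N k : ℕ} (h : N < k)
    (s : PowerSeries ℂ) : coeff N (w ^ k * s) = 0 := by
  rw [coeff_mul]
  refine Finset.sum_eq_zero fun p hp => ?_
  have hm := Finset.HasAntidiagonal.mem_antidiagonal.mp hp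
  rw [coeff_pow_eq_zero hw (by omega), zero_mul]

lemma coeff_SUB_eq (hw : constantCoeff w = 0) (f : PowerSeries ℂ) {i N : ℕ} (h : i ≤ N) :
    coeff i (SUB w f) = coeff i (Polynomial.aeval w (trunc (N + 1) f)) := by
  rw [Polynomial.aeval_eq_sum_range' (natDegree_trunc_lt f N) w, map_sum, coeff_SUB]
  have hc : ∀ k ∈ range (N + 1),
      coeff i ((trunc (N + 1) f).coeff k • w ^ k) = coeff k f * coeff i (w ^ k) := by
    intro k hk
    rw [map_smul, smul_eq_mul, coeff_trunc, if_pos (mem_range.mp hk)]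
  rw [Finset.sum_congr rfl hc]
  apply Finset.sum_subset
  · exact Finset.range_subset_range.mpr (by omega)
  · intro k hk hki
    rw [coeff_pow_eq_zero hw (by simp only [mem_range] at hk hki; omega), mul_zero]

lemma SUB_mul (hw : constantCoeff w = 0) (f g : PowerSeries ℂ) :
    SUB w (f * g) = SUB w f * SUB w g := by
  ext N
  set p := trunc (N + 1) f with hp
  set q := trunc (N + 1) g with hq
  have hd : (Polynomial.X : Polynomial ℂ) ^ (N + 1) ∣ p * q - trunc (N + 1) (f * g) := by
    rw [Polynomial.X_pow_dvd_iff]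
    intro d hdN
    rw [Polynomial.coeff_sub, Polynomial.coeff_mul, hp, hq, PowerSeries.coeff_trunc,
      if_pos hdN, PowerSeries.coeff_mul]
    rw [sub_eq_zero]
    refine Finset.sum_congr rfl fun ab hab => ?_
    have hm := Finset.HasAntidiagonal.mem_antidiagonal.mp hab
    rw [PowerSeries.coeff_trunc, PowerSeries.coeff_trunc, if_pos (by omega), if_pos (by omega)]
  obtain ⟨e, he⟩ := hd
  have key : Polynomial.aeval w (p * q) =
      Polynomial.aeval w (trunc (N + 1) (f * g)) + w ^ (N + 1) * Polynomial.aeval w e := by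
    have h2 := congrArg (Polynomial.aeval w) he
    rw [map_sub, map_mul (Polynomial.aeval w), map_mul (Polynomial.aeval w), map_pow, Polynomial.aeval_X] at h2
    rw [map_mul]; linear_combination h2
  calc coeff N (SUB w (f * g))
      = coeff N (Polynomial.aeval w (trunc (N + 1) (f * g))) := coeff_SUB_eq hw _ le_rfl
    _ = coeff N (Polynomial.aeval w (p * q)) := by
        rw [key, map_add, coeff_pow_mul_eq_zero hw (Nat.lt_succ_self N), add_zero]
    _ = coeff N (Polynomial.aeval w p * Polynomial.aeval w q) := by rw [map_mul]
    _ = coeff N (SUB w f * SUB w g) := by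
        rw [coeff_mul, coeff_mul]
        refine Finset.sum_congr rfl fun ab hab => ?_
        have hm := Finset.HasAntidiagonal.mem_antidiagonal.mp hab
        rw [coeff_SUB_eq hw f (show ab.1 ≤ N by omega),
          coeff_SUB_eq hw g (show ab.2 ≤ N by omega)]

lemma SUB_one (w : PowerSeries ℂ) : SUB w 1 = 1 := by
  ext n
  rw [coeff_SUB, Finset.sum_eq_single 0]
  · simp
  · intro k hk hk0
    rw [PowerSeries.coeff_one, if_neg hk0, zero_mul]
  · intro h
    exact absurd (Finset.mem_range.mpr (by omega)) h

lemma SUB_pow (hw : constantCoeff w = 0) (f : PowerSeries ℂ) (n : ℕ) :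
    SUB w (f ^ n) = (SUB w f) ^ n := by
  induction n with
  | zero => simpa using SUB_one w
  | succ n ih => rw [pow_succ, pow_succ, SUB_mul hw, ih]

lemma coeff_mul_SUB (hw : constantCoeff w = 0) (P g : PowerSeries ℂ) (N : ℕ) :
    coeff N (P * SUB w g) = ∑ j ∈ range (N + 1), coeff j g * coeff N (P * w ^ j) := by
  have h1 : coeff N (P * SUB w g) =
      coeff N (P * Polynomial.aeval w (trunc (N + 1) g)) := by
    rw [coeff_mul, coeff_mul]
    refine Finset.sum_congr rfl fun ab hab => ?_
    have hm := Finset.HasAntidiagonal.mem_antidiagonal.mp hab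
    rw [coeff_SUB_eq hw g (show ab.2 ≤ N by omega)]
  rw [h1, Polynomial.aeval_eq_sum_range' (natDegree_trunc_lt g N) w, Finset.mul_sum, map_sum]
  refine Finset.sum_congr rfl fun k hk => ?_
  rw [mul_smul_comm, map_smul, coeff_trunc, if_pos (mem_range.mp hk), smul_eq_mul]



lemma coeff_pow_congr {v v' : PowerSeries ℂ} {N : ℕ}
    (h : ∀ i ≤ N, coeff i v = coeff i v') :
    ∀ k, ∀ b ≤ N, coeff b (v ^ k) = coeff b (v' ^ k) := by
  intro k
  induction k with
  | zero => intro b _; rfl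
  | succ k ih =>
    intro b hb
    rw [pow_succ, pow_succ, coeff_mul, coeff_mul]
    refine Finset.sum_congr rfl fun ab hab => ?_
    have hm := Finset.HasAntidiagonal.mem_antidiagonal.mp hab
    rw [ih ab.1 (by omega), h ab.2 (by omega)]

/-- iterates converging to the solution of `W = X * f(W)` -/
def wseq (f : PowerSeries ℂ) : ℕ → PowerSeries ℂ
  | 0 => 0
  | s + 1 => X * SUB (wseq f s) f

lemma constantCoeff_wseq (f : PowerSeries ℂ) (s : ℕ) :
    constantCoeff (wseq f s) = 0 := by
  cases s with
  | zero => simp [wseq]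
  | succ s => simp [wseq]

lemma wseq_stable (f : PowerSeries ℂ) :
    ∀ i s t : ℕ, i ≤ s → i ≤ t → coeff i (wseq f s) = coeff i (wseq f t) := by
  intro i
  induction i using Nat.strong_induction_on with
  | _ i IH =>
    intro s t hs ht
    cases i with
    | zero =>
      rw [coeff_zero_eq_constantCoeff, constantCoeff_wseq, constantCoeff_wseq]
    | succ i =>
      obtain ⟨s', rfl⟩ : ∃ s', s = s' + 1 := ⟨s - 1, by omega⟩
      obtain ⟨t', rfl⟩ : ∃ t', t = t' + 1 := ⟨t - 1, by omega⟩
      show coeff (i + 1) (X * SUB (wseq f s') f) = coeff (i + 1) (X * SUB (wseq f t') f)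
      rw [coeff_succ_X_mul, coeff_succ_X_mul, coeff_SUB, coeff_SUB]
      refine Finset.sum_congr rfl fun k _ => ?_
      congr 1
      exact coeff_pow_congr
        (fun j hj => IH j (by omega) s' t' (by omega) (by omega)) k i le_rfl

/-- The Lagrange fixed-point series `W` with `W = X * f(W)`. -/
def W (f : PowerSeries ℂ) : PowerSeries ℂ := mk fun i => coeff i (wseq f i)

lemma coeff_W (f : PowerSeries ℂ) {i s : ℕ} (h : i ≤ s) :
    coeff i (W f) = coeff i (wseq f s) := by
  rw [W, coeff_mk]; exact wseq_stable f i i s le_rfl h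

lemma hW0 (f : PowerSeries ℂ) : constantCoeff (W f) = 0 := by
  rw [← coeff_zero_eq_constantCoeff_apply, coeff_W f (le_refl 0),
    coeff_zero_eq_constantCoeff_apply, constantCoeff_wseq]

lemma W_eq (f : PowerSeries ℂ) : W f = X * SUB (W f) f := by
  ext i
  cases i with
  | zero =>
    rw [coeff_zero_eq_constantCoeff_apply, hW0, coeff_zero_eq_constantCoeff_apply,
      map_mul, constantCoeff_X, zero_mul]
  | succ i =>
    rw [coeff_succ_X_mul, coeff_W f (show i + 1 ≤ i + 2 by omega),
      show wseq f (i + 2) = X * SUB (wseq f (i + 1)) f from rfl, coeff_succ_X_mul,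
      coeff_SUB, coeff_SUB]
    refine Finset.sum_congr rfl fun k _ => ?_
    congr 1
    exact coeff_pow_congr
      (fun j hj => (coeff_W f (show j ≤ i + 1 by omega)).symm) k i le_rfl


section Main

variable (f : PowerSeries ℂ) (hf : constantCoeff f = 1)

/-- `U = f(W)`, so that `W = X * U`. -/
def U (f : PowerSeries ℂ) : PowerSeries ℂ := SUB (W f) f

lemma W_eq_X_mul_U : W f = X * U f := W_eq f

include hf in
lemma hU0 : constantCoeff (U f) = 1 := by
  rw [← coeff_zero_eq_constantCoeff_apply, U, coeff_SUB, Finset.sum_range_one, pow_zero]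
  simp [hf]

include hf in
lemma hUne : constantCoeff (U f) ≠ 0 := by rw [hU0 f hf]; exact one_ne_zero

include hf in
lemma hUinv : U f * (U f)⁻¹ = 1 := PowerSeries.mul_inv_cancel _ (hUne f hf)

include hf in
lemma powcancel {j t : ℕ} (h : j ≤ t) : ((U f)⁻¹) ^ t * (U f) ^ j = ((U f)⁻¹) ^ (t - j) := by
  have h1 : (U f)⁻¹ * U f = 1 := PowerSeries.inv_mul_cancel _ (hUne f hf)
  calc ((U f)⁻¹) ^ t * (U f) ^ j
      = ((U f)⁻¹) ^ (t - j) * (((U f)⁻¹) ^ j * (U f) ^ j) := by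
        rw [← mul_assoc, ← pow_add]; congr 2; omega
    _ = ((U f)⁻¹) ^ (t - j) := by rw [← mul_pow, h1, one_pow, mul_one]

end Main


section Deriv

variable {w : PowerSeries ℂ}

/-- Chain rule for `SUB`. -/
lemma derivative_SUB (hw : constantCoeff w = 0) (f : PowerSeries ℂ) :
    d⁄dX ℂ (SUB w f) = SUB w (d⁄dX ℂ f) * d⁄dX ℂ w := by
  ext N
  have hterm : ∀ k : ℕ, coeff (N + 1) (w ^ k) * ((N : ℂ) + 1) =
      (k : ℂ) * coeff N (w ^ (k - 1) * d⁄dX ℂ w) := by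
    intro k
    have h1 : coeff N (d⁄dX ℂ (w ^ k)) = coeff (N + 1) (w ^ k) * ((N : ℂ) + 1) := by
      rw [coeff_derivative]
    rw [← h1, Derivation.leibniz_pow, map_nsmul, smul_eq_mul, nsmul_eq_mul]
  rw [coeff_derivative]
  rw [coeff_SUB, Finset.sum_mul]
  have LHS : ∑ k ∈ range (N + 1 + 1), coeff k f * coeff (N + 1) (w ^ k) * ((N : ℂ) + 1)
      = ∑ k ∈ range (N + 2), coeff k f * ((k : ℂ) * coeff N (w ^ (k - 1) * d⁄dX ℂ w)) := by
    refine Finset.sum_congr rfl fun k _ => ?_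
    rw [mul_assoc, hterm k]
  rw [LHS, Finset.sum_range_succ']
  simp only [Nat.cast_zero, zero_mul, mul_zero, add_zero, Nat.add_sub_cancel]
  rw [mul_comm (SUB w (d⁄dX ℂ f)) (d⁄dX ℂ w), coeff_mul_SUB hw]
  refine Finset.sum_congr rfl fun j _ => ?_
  rw [coeff_derivative, mul_comm (d⁄dX ℂ w) (w ^ j)]
  push_cast
  ring

end Deriv


section Jacobi

variable (f : PowerSeries ℂ) (hf : constantCoeff f = 1)

lemma dW_eq : d⁄dX ℂ (W f) = U f + X * d⁄dX ℂ (U f) := by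
  rw [W_eq_X_mul_U, Derivation.leibniz, derivative_X, smul_eq_mul, smul_eq_mul, mul_one]
  ring

include hf in
/-- Jacobi's residue lemma: `[z^s] (W' · U^{-(s+1)}) = δ_{s,0}`. -/
lemma jacobi : ∀ s : ℕ,
    coeff s (d⁄dX ℂ (W f) * ((U f)⁻¹) ^ (s + 1)) = if s = 0 then 1 else 0 := by
  intro s
  cases s with
  | zero =>
    rw [if_pos rfl, pow_one, coeff_zero_eq_constantCoeff_apply, map_mul]
    have h1 : constantCoeff (d⁄dX ℂ (W f)) = 1 := by
      rw [← coeff_zero_eq_constantCoeff_apply, coeff_derivative,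
        show coeff (0+1) (W f) = coeff 0 (U f) by
          rw [W_eq_X_mul_U, coeff_succ_X_mul],
        coeff_zero_eq_constantCoeff_apply, hU0 f hf]
      norm_num
    rw [h1, PowerSeries.constantCoeff_inv, hU0 f hf]
    norm_num
  | succ r =>
    rw [if_neg (Nat.succ_ne_zero r)]
    set T : PowerSeries ℂ := ((U f)⁻¹) ^ (r + 2) * d⁄dX ℂ (U f) with hT
    set V : PowerSeries ℂ := ((U f)⁻¹) ^ (r + 1) with hV
    have hsplit : d⁄dX ℂ (W f) * ((U f)⁻¹) ^ (r + 1 + 1) = V + X * T := by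
      rw [dW_eq, add_mul, hV, hT]
      have h1 : U f * ((U f)⁻¹) ^ (r + 2) = ((U f)⁻¹) ^ (r + 1) := by
        rw [pow_succ, ← mul_assoc, mul_comm (U f), mul_assoc, hUinv f hf, mul_one]
      calc U f * ((U f)⁻¹) ^ (r + 2) + X * d⁄dX ℂ (U f) * ((U f)⁻¹) ^ (r + 2)
          = ((U f)⁻¹) ^ (r + 1) + X * d⁄dX ℂ (U f) * ((U f)⁻¹) ^ (r + 2) := by rw [h1]
        _ = ((U f)⁻¹) ^ (r + 1) + X * (((U f)⁻¹) ^ (r + 2) * d⁄dX ℂ (U f)) := by ring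
    have hdV : d⁄dX ℂ V = -(PowerSeries.C ((r : ℂ) + 1) * T) := by
      rw [hV, Derivation.leibniz_pow, PowerSeries.derivative_inv', Nat.add_sub_cancel,
        smul_eq_mul, nsmul_eq_mul, ← map_natCast (PowerSeries.C) (r + 1)]
      push_cast
      rw [hT]
      ring
    have hne : ((r : ℂ) + 1) ≠ 0 := Nat.cast_add_one_ne_zero r
    have hTr : coeff r T = -(coeff (r + 1) V) := by
      have h2 : coeff r (d⁄dX ℂ V) = coeff (r + 1) V * ((r : ℂ) + 1) :=
        coeff_derivative V r
      rw [hdV, map_neg, coeff_C_mul] at h2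
      apply mul_right_cancel₀ hne
      linear_combination -h2
    rw [hsplit, map_add, coeff_succ_X_mul, hTr]
    ring

end Jacobi


section Master

variable (f : PowerSeries ℂ) (hf : constantCoeff f = 1)

include hf in
/-- Master Lagrange identity: `[z^N] (W' · U^{-(N+1)} · U^n) = [x^N] f^n`. -/
lemma master (n N : ℕ) :
    coeff N (d⁄dX ℂ (W f) * ((U f)⁻¹) ^ (N + 1) * (U f) ^ n) = coeff N (f ^ n) := by
  have hU : (U f) ^ n = SUB (W f) (f ^ n) := (SUB_pow (hW0 f) f n).symm
  rw [hU, coeff_mul_SUB (hW0 f)]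
  have hterm : ∀ j ≤ N,
      coeff N (d⁄dX ℂ (W f) * ((U f)⁻¹) ^ (N + 1) * (W f) ^ j) =
        if j = N then 1 else 0 := by
    intro j hj
    have hWp : (W f) ^ j = X ^ j * (U f) ^ j := by rw [W_eq_X_mul_U, mul_pow]
    have hassoc : d⁄dX ℂ (W f) * ((U f)⁻¹) ^ (N + 1) * (W f) ^ j =
        X ^ j * (d⁄dX ℂ (W f) * (((U f)⁻¹) ^ (N + 1) * (U f) ^ j)) := by
      rw [hWp]; ring
    rw [hassoc, powcancel f hf (by omega : j ≤ N + 1), coeff_X_pow_mul', if_pos hj,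
      show N + 1 - j = (N - j) + 1 by omega, jacobi f hf (N - j)]
    have hiff : (N - j = 0) ↔ (j = N) := by omega
    simp [hiff]
  rw [Finset.sum_eq_single N]
  · rw [hterm N le_rfl, if_pos rfl, mul_one]
  · intro j hjm hjne
    rw [hterm j (by simp only [mem_range] at hjm; omega), if_neg hjne, mul_zero]
  · intro h
    exact absurd (Finset.mem_range.mpr (Nat.lt_succ_self N)) h

include hf in
/-- `U` is the Lagrange-inversion series: `[z^m] U = (1/(m+1))·[x^m] f^{m+1}`. -/
lemma U_eq : U f = PowerSeries.mk fun m => ((m : ℂ) + 1)⁻¹ * coeff m (f ^ (m + 1)) := by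
  ext m
  rw [coeff_mk]
  have h1 : coeff m (d⁄dX ℂ (W f)) = coeff m (U f) * ((m : ℂ) + 1) := by
    rw [coeff_derivative, W_eq_X_mul_U, coeff_succ_X_mul]
  have h2 : d⁄dX ℂ (W f) = d⁄dX ℂ (W f) * ((U f)⁻¹) ^ (m + 1) * (U f) ^ (m + 1) := by
    rw [mul_assoc, powcancel f hf le_rfl, Nat.sub_self, pow_zero, mul_one]
  have h3 : coeff m (d⁄dX ℂ (W f)) = coeff m (f ^ (m + 1)) := by
    rw [h2]; exact master f hf (m + 1) m
  have hne : ((m : ℂ) + 1) ≠ 0 := Nat.cast_add_one_ne_zero m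
  have h4 : coeff m (U f) * ((m : ℂ) + 1) = coeff m (f ^ (m + 1)) := by
    rw [← h1, h3]
  field_simp
  linear_combination h4

include hf in
lemma coeff_dW_inv (k : ℕ) :
    coeff (k + 1) (d⁄dX ℂ (W f) * (U f)⁻¹) = coeff (k + 1) (f ^ (k + 1)) := by
  have h1 : d⁄dX ℂ (W f) * (U f)⁻¹ =
      d⁄dX ℂ (W f) * ((U f)⁻¹) ^ (k + 1 + 1) * (U f) ^ (k + 1) := by
    rw [mul_assoc, powcancel f hf (by omega : k + 1 ≤ k + 2),
      show k + 1 + 1 - (k + 1) = 1 by omega, pow_one]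
  rw [h1]; exact master f hf (k + 1) (k + 1)

include hf in
lemma dW_inv_eq : d⁄dX ℂ (W f) * (U f)⁻¹ = 1 + X * (d⁄dX ℂ (U f) * (U f)⁻¹) := by
  rw [dW_eq, add_mul, hUinv f hf]
  ring

end Master


section Final

variable (f : PowerSeries ℂ) (hf : constantCoeff f = 1)

/-- The exponent series `G = ∑_{k≥1} (1/k)·([x^k] f^k)·z^k`. -/
def Gs (f : PowerSeries ℂ) : PowerSeries ℂ :=
  PowerSeries.mk fun k => if k = 0 then 0 else (k : ℂ)⁻¹ * PowerSeries.coeff k (f ^ k)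

lemma hG0 : constantCoeff (Gs f) = 0 := by
  rw [← coeff_zero_eq_constantCoeff_apply, Gs, coeff_mk, if_pos rfl]

include hf in
lemma dG_eq : d⁄dX ℂ (Gs f) = d⁄dX ℂ (U f) * (U f)⁻¹ := by
  ext k
  have h1 : coeff k (d⁄dX ℂ (Gs f)) = coeff (k + 1) (f ^ (k + 1)) := by
    rw [coeff_derivative, Gs, coeff_mk, if_neg (Nat.succ_ne_zero k)]
    have hne : ((k : ℂ) + 1) ≠ 0 := Nat.cast_add_one_ne_zero k
    push_cast
    field_simp
  have h2 : coeff (k + 1) (f ^ (k + 1)) = coeff k (d⁄dX ℂ (U f) * (U f)⁻¹) := by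
    rw [← coeff_dW_inv f hf k, dW_inv_eq f hf, map_add, coeff_succ_X_mul]
    have : coeff (k + 1) (1 : PowerSeries ℂ) = 0 := by
      rw [PowerSeries.coeff_one, if_neg (Nat.succ_ne_zero k)]
    rw [this, zero_add]
  rw [h1, h2]

include hf in
lemma dU_eq : d⁄dX ℂ (U f) = d⁄dX ℂ (Gs f) * U f := by
  rw [dG_eq f hf, mul_assoc, PowerSeries.inv_mul_cancel _ (hUne f hf), mul_one]

lemma formalExp_eq_SUB (G : PowerSeries ℂ) : formalExp G = SUB G (PowerSeries.exp ℂ) := by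
  ext n
  rw [formalExp, coeff_mk, coeff_SUB]
  refine Finset.sum_congr rfl fun j _ => ?_
  rw [PowerSeries.coeff_exp]
  rw [show ((algebraMap ℚ ℂ) (1 / (j.factorial : ℚ))) = ((j.factorial : ℂ))⁻¹ by
    rw [map_div₀, map_one, map_natCast, one_div]]
  rw [div_eq_inv_mul, mul_comm]

lemma derivative_exp_eq : d⁄dX ℂ (PowerSeries.exp ℂ) = PowerSeries.exp ℂ := by
  ext n
  rw [coeff_derivative, PowerSeries.coeff_exp, PowerSeries.coeff_exp]
  rw [show ((n : ℂ) + 1) = (algebraMap ℚ ℂ) ((n : ℚ) + 1) by push_cast; ring, ← map_mul]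
  congr 1
  rw [Nat.factorial_succ]
  have h1 : ((n.factorial : ℚ)) ≠ 0 := by exact_mod_cast Nat.factorial_ne_zero n
  have h2 : ((n : ℚ) + 1) ≠ 0 := Nat.cast_add_one_ne_zero n
  field_simp
  push_cast; ring

/-- Uniqueness for the linear ODE `y' = H·y`. -/
lemma ode_unique (H y₁ y₂ : PowerSeries ℂ) (h1 : d⁄dX ℂ y₁ = H * y₁)
    (h2 : d⁄dX ℂ y₂ = H * y₂) (h0 : coeff 0 y₁ = coeff 0 y₂) : y₁ = y₂ := by
  ext n
  induction n using Nat.strong_induction_on with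
  | _ n IH =>
    cases n with
    | zero => exact h0
    | succ n =>
      have e1 : coeff (n + 1) y₁ * ((n : ℂ) + 1) = coeff (n + 1) y₂ * ((n : ℂ) + 1) := by
        rw [← coeff_derivative, ← coeff_derivative, h1, h2, coeff_mul, coeff_mul]
        refine Finset.sum_congr rfl fun ab hab => ?_
        have hm := Finset.HasAntidiagonal.mem_antidiagonal.mp hab
        rw [IH ab.2 (by omega)]
      exact mul_right_cancel₀ (Nat.cast_add_one_ne_zero n) e1

include hf in
lemma main_result : formalExp (Gs f) =
    PowerSeries.mk fun m => ((m : ℂ) + 1)⁻¹ * PowerSeries.coeff m (f ^ (m + 1)) := by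
  rw [← U_eq f hf]
  apply ode_unique (d⁄dX ℂ (Gs f))
  · rw [formalExp_eq_SUB, derivative_SUB (hG0 f), derivative_exp_eq, mul_comm]
  · rw [← dU_eq f hf]
  · rw [formalExp_eq_SUB, coeff_SUB, Finset.sum_range_one, pow_zero]
    have hc : coeff 0 (PowerSeries.exp ℂ) = 1 := by
      rw [coeff_zero_eq_constantCoeff_apply, PowerSeries.constantCoeff_exp]
    have h2 : coeff 0 (U f) = 1 := by
      rw [coeff_zero_eq_constantCoeff_apply, hU0 f hf]
    rw [hc, one_mul, h2, PowerSeries.coeff_one, if_pos rfl]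

end Final

end LagrangeAux

/-- **Proposition (lem:3).** For a formal power series `f = 1 + ∑_{k≥1} f_k x^k` with
complex coefficients and constant term `1`, one has the identity of formal power series
in `z`: `exp(∑_{k≥1} (1/k)·([x^k] f^k)·z^k) = ∑_{k≥1} (1/k)·([x^{k−1}] f^k)·z^{k−1}`. -/
theorem formalExp_sum_coeff_pow (f : PowerSeries ℂ)
    (hf : PowerSeries.constantCoeff f = 1) :
    formalExp (PowerSeries.mk fun k =>
        if k = 0 then 0 else (k : ℂ)⁻¹ * PowerSeries.coeff k (f ^ k)) =
      PowerSeries.mk fun m => ((m : ℂ) + 1)⁻¹ * PowerSeries.coeff m (f ^ (m + 1)) :=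
  LagrangeAux.main_result f hf
end
end

section
/- Let f(y) = y^{−1} + ∑_{k≥0} f_k y^k be a formal Laurent series with complex coefficients having at most a simple pole at y = 0 with residue 1. Then the following identity of formal power series in w holds: w·exp(∑_{k≥1} (1/k)·([y^0] f^k)·w^k) = ∑_{k≥1} (1/k)·([y^{−1}] f^k)·w^k. -/
namespace LagrangeAux

open PowerSeries Finset

/-! ### Basic vanishing lemma -/

lemma coeff_pow_zero (φ : PowerSeries ℂ) (hφ : constantCoeff φ = 0) {n j : ℕ} (h : n < j) :
    coeff n (φ ^ j) = 0 := by
  have hd : (X : ℂ⟦X⟧) ^ j ∣ φ ^ j := pow_dvd_pow_of_dvd (X_dvd_iff.mpr hφ) j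
  exact X_pow_dvd_iff.mp hd n h

/-! ### Composition of power series (substitution of `φ` into `g`), `pcomp φ g = g ∘ φ` -/

noncomputable def pcomp (φ g : PowerSeries ℂ) : PowerSeries ℂ :=
  PowerSeries.mk fun n => ∑ j ∈ Finset.range (n + 1), coeff j g * coeff n (φ ^ j)

lemma coeff_pcomp (φ g : PowerSeries ℂ) (n : ℕ) :
    coeff n (pcomp φ g) = ∑ j ∈ Finset.range (n + 1), coeff j g * coeff n (φ ^ j) :=
  coeff_mk _ _

lemma coeff_pcomp_of_lt (φ : PowerSeries ℂ) (hφ : constantCoeff φ = 0) (g : PowerSeries ℂ)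
    {n N : ℕ} (hn : n < N) :
    coeff n (pcomp φ g) = ∑ j ∈ Finset.range N, coeff j g * coeff n (φ ^ j) := by
  rw [coeff_pcomp]
  apply Finset.sum_subset (Finset.range_subset_range.mpr hn)
  intro j hj hj'
  rw [coeff_pow_zero φ hφ (by simpa using hj'), mul_zero]

lemma coeff_pcomp_eval₂ (φ : PowerSeries ℂ) (hφ : constantCoeff φ = 0) (g : PowerSeries ℂ)
    {n N : ℕ} (hn : n < N) :
    coeff n (pcomp φ g) = coeff n ((trunc N g).eval₂ C φ) := by
  rw [coeff_pcomp_of_lt φ hφ g hn, eval₂_trunc_eq_sum_range, map_sum]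
  exact Finset.sum_congr rfl fun j _ => by rw [coeff_C_mul]

lemma coeff_eval₂_zero (φ : PowerSeries ℂ) (hφ : constantCoeff φ = 0) {n : ℕ}
    {p : Polynomial ℂ} (hp : ∀ i ≤ n, p.coeff i = 0) :
    coeff n (p.eval₂ C φ) = 0 := by
  rw [Polynomial.eval₂_eq_sum, Polynomial.sum, map_sum]
  apply Finset.sum_eq_zero
  intro e he
  rcases le_or_gt e n with h | h
  · rw [hp e h, map_zero, zero_mul, map_zero]
  · rw [coeff_C_mul, coeff_pow_zero φ hφ h, mul_zero]

lemma coeff_eval₂_congr (φ : PowerSeries ℂ) (hφ : constantCoeff φ = 0) {n : ℕ}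
    {p q : Polynomial ℂ} (h : ∀ i ≤ n, p.coeff i = q.coeff i) :
    coeff n (p.eval₂ C φ) = coeff n (q.eval₂ C φ) := by
  have h0 : coeff n ((p - q).eval₂ C φ) = 0 :=
    coeff_eval₂_zero φ hφ fun i hi => by simp [h i hi]
  rw [Polynomial.eval₂_sub, map_sub, sub_eq_zero] at h0
  exact h0

lemma pcomp_one (φ : PowerSeries ℂ) : pcomp φ 1 = 1 := by
  ext n
  rw [coeff_pcomp]
  rcases Nat.eq_zero_or_pos n with h | h
  · subst h; simp
  · rw [Finset.sum_eq_single 0]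
    · simp
    · intro j hj hj0
      rw [coeff_one, if_neg hj0, zero_mul]
    · simp

lemma pcomp_mul (φ : PowerSeries ℂ) (hφ : constantCoeff φ = 0) (f g : PowerSeries ℂ) :
    pcomp φ (f * g) = pcomp φ f * pcomp φ g := by
  ext n
  have key : coeff n (pcomp φ (f * g)) =
      coeff n ((trunc (n+1) f).eval₂ C φ * (trunc (n+1) g).eval₂ C φ) := by
    rw [coeff_pcomp_eval₂ φ hφ _ (Nat.lt_succ_self n), ← Polynomial.eval₂_mul]
    apply coeff_eval₂_congr φ hφ
    intro i hi
    have hi' : i < n + 1 := Nat.lt_succ_of_le hi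
    rw [coeff_trunc, if_pos hi']
    have h2 : (Polynomial.coeff (trunc (n+1) f * trunc (n+1) g) i) =
        coeff i ((trunc (n+1) f : PowerSeries ℂ) * (trunc (n+1) g : PowerSeries ℂ)) := by
      rw [← Polynomial.coe_mul, Polynomial.coeff_coe]
    rw [h2, coeff_mul, coeff_mul]
    apply Finset.sum_congr rfl
    intro x hx
    rw [Finset.HasAntidiagonal.mem_antidiagonal] at hx
    rw [coeff_coe_trunc_of_lt (Nat.lt_succ_of_le (le_of_add_le_left (hx.le.trans hi))),
      coeff_coe_trunc_of_lt (Nat.lt_succ_of_le (le_of_add_le_right (hx.le.trans hi)))]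
  rw [key, coeff_mul, coeff_mul]
  apply Finset.sum_congr rfl
  intro x hx
  rw [Finset.HasAntidiagonal.mem_antidiagonal] at hx
  rw [← coeff_pcomp_eval₂ φ hφ f (Nat.lt_succ_of_le (le_of_add_le_left hx.le)),
    ← coeff_pcomp_eval₂ φ hφ g (Nat.lt_succ_of_le (le_of_add_le_right hx.le))]

lemma pcomp_pow (φ : PowerSeries ℂ) (hφ : constantCoeff φ = 0) (f : PowerSeries ℂ) (k : ℕ) :
    pcomp φ (f ^ k) = pcomp φ f ^ k := by
  induction k with
  | zero => simpa using pcomp_one φ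
  | succ k ih => rw [pow_succ, pow_succ, pcomp_mul φ hφ, ih]

lemma constantCoeff_pcomp (φ g : PowerSeries ℂ) :
    constantCoeff (pcomp φ g) = constantCoeff g := by
  have := coeff_pcomp φ g 0
  simp only [zero_add, Finset.range_one, Finset.sum_singleton, pow_zero] at this
  simpa [coeff_zero_eq_constantCoeff] using this

/-! ### The fixed point `Φ = X · (h ∘ Φ)` -/

lemma coeff_pow_congr_s12 {φ φ' : PowerSeries ℂ} {n : ℕ}
    (h : ∀ i ≤ n, coeff i φ = coeff i φ') (j : ℕ) :
    ∀ m ≤ n, coeff m (φ ^ j) = coeff m (φ' ^ j) := by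
  induction j with
  | zero => intro m _; rfl
  | succ j ih =>
    intro m hm
    rw [pow_succ, pow_succ, coeff_mul, coeff_mul]
    apply Finset.sum_congr rfl
    intro x hx
    rw [Finset.HasAntidiagonal.mem_antidiagonal] at hx
    rw [ih x.1 (le_trans (le_of_add_le_left hx.le) hm),
      h x.2 (le_trans (le_of_add_le_right hx.le) hm)]

lemma coeff_pcomp_congr {φ φ' : PowerSeries ℂ} {n : ℕ}
    (h : ∀ i ≤ n, coeff i φ = coeff i φ') (g : PowerSeries ℂ) :
    ∀ m ≤ n, coeff m (pcomp φ g) = coeff m (pcomp φ' g) := by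
  intro m hm
  rw [coeff_pcomp, coeff_pcomp]
  exact Finset.sum_congr rfl fun j _ => by rw [coeff_pow_congr_s12 h j m hm]

noncomputable def iterφ (h : PowerSeries ℂ) : ℕ → PowerSeries ℂ
  | 0 => X
  | N + 1 => X * pcomp (iterφ h N) h

lemma constantCoeff_iterφ (h : PowerSeries ℂ) (N : ℕ) :
    constantCoeff (iterφ h N) = 0 := by
  cases N with
  | zero => simp [iterφ]
  | succ N => simp [iterφ]

lemma iterφ_stable (h : PowerSeries ℂ) (N : ℕ) :
    ∀ i ≤ N, coeff i (iterφ h N) = coeff i (iterφ h (N + 1)) := by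
  induction N with
  | zero =>
    intro i hi
    interval_cases i
    · rw [coeff_zero_eq_constantCoeff, constantCoeff_iterφ, constantCoeff_iterφ]
  | succ N ih =>
    intro i hi
    show coeff i (X * pcomp (iterφ h N) h) = coeff i (X * pcomp (iterφ h (N+1)) h)
    cases i with
    | zero => simp
    | succ i =>
      rw [coeff_succ_X_mul, coeff_succ_X_mul]
      exact coeff_pcomp_congr (fun m hm => ih m hm) h i (Nat.lt_succ_iff.mp hi)

lemma iterφ_stable' (h : PowerSeries ℂ) {N M : ℕ} (hNM : N ≤ M) :
    ∀ i ≤ N, coeff i (iterφ h N) = coeff i (iterφ h M) := by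
  induction M with
  | zero => intro i hi; rw [Nat.le_zero.mp hNM]
  | succ M ih =>
    rcases Nat.lt_succ_iff_lt_or_eq.mp (Nat.lt_succ_of_le hNM) with hlt | heq
    · intro i hi
      rw [ih (Nat.lt_succ_iff.mp hlt) i hi,
        iterφ_stable h M i (hi.trans (Nat.lt_succ_iff.mp hlt))]
    · intro i hi; rw [heq]

noncomputable def Phi (h : PowerSeries ℂ) : PowerSeries ℂ :=
  PowerSeries.mk fun n => coeff n (iterφ h n)

lemma coeff_Phi (h : PowerSeries ℂ) {n N : ℕ} (hn : n ≤ N) :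
    coeff n (Phi h) = coeff n (iterφ h N) := by
  rw [Phi, coeff_mk]
  exact iterφ_stable' h hn n le_rfl

lemma constantCoeff_Phi (h : PowerSeries ℂ) : constantCoeff (Phi h) = 0 := by
  rw [← coeff_zero_eq_constantCoeff, coeff_Phi h (le_refl 0),
    coeff_zero_eq_constantCoeff, constantCoeff_iterφ]

lemma Phi_eq (h : PowerSeries ℂ) : Phi h = X * pcomp (Phi h) h := by
  ext n
  cases n with
  | zero =>
    rw [coeff_zero_eq_constantCoeff, constantCoeff_Phi]
    simp
  | succ n =>
    rw [coeff_Phi h (le_refl (n+1))]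
    show coeff (n+1) (X * pcomp (iterφ h n) h) = _
    rw [coeff_succ_X_mul, coeff_succ_X_mul]
    exact coeff_pcomp_congr (fun m hm => (coeff_Phi h hm).symm) h n le_rfl

/-! ### The residue computations -/

lemma deriv_inv' (u : PowerSeries ℂ) (hu : constantCoeff u = 1) :
    d⁄dX ℂ u⁻¹ = -(u⁻¹ ^ 2 * d⁄dX ℂ u) := by
  have hu0 : constantCoeff u ≠ 0 := by rw [hu]; exact one_ne_zero
  have h1 : u * u⁻¹ = 1 := PowerSeries.mul_inv_cancel u hu0
  have h2 : d⁄dX ℂ (u * u⁻¹) = 0 := by rw [h1]; exact Derivation.map_one_eq_zero _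
  rw [Derivation.leibniz] at h2
  have h3 : u * d⁄dX ℂ u⁻¹ = -(u⁻¹ * d⁄dX ℂ u) := by
    rw [smul_eq_mul, smul_eq_mul] at h2; linear_combination h2
  calc d⁄dX ℂ u⁻¹ = u⁻¹ * (u * d⁄dX ℂ u⁻¹) := by
        rw [← mul_assoc, PowerSeries.inv_mul_cancel u hu0, one_mul]
    _ = -(u⁻¹ ^ 2 * d⁄dX ℂ u) := by rw [h3]; ring

lemma key_resid (u : PowerSeries ℂ) (hu : constantCoeff u = 1) (m : ℕ) :
    coeff m (u⁻¹ ^ (m + 1) * d⁄dX ℂ (X * u)) = if m = 0 then 1 else 0 := by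
  have hu0 : constantCoeff u ≠ 0 := by rw [hu]; exact one_ne_zero
  have hvu : u⁻¹ * u = 1 := PowerSeries.inv_mul_cancel u hu0
  have hdφ : d⁄dX ℂ (X * u) = u + X * d⁄dX ℂ u := by
    rw [Derivation.leibniz, smul_eq_mul, smul_eq_mul, derivative_X, mul_one, add_comm]
  cases m with
  | zero =>
    rw [if_pos rfl, coeff_zero_eq_constantCoeff, map_mul, hdφ, pow_one, map_add, map_mul,
      constantCoeff_X, zero_mul, add_zero, PowerSeries.constantCoeff_inv, hu]
    norm_num
  | succ s =>
    rw [if_neg (Nat.succ_ne_zero s), hdφ, mul_add, map_add]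
    have e1 : u⁻¹ ^ (s + 2) * u = u⁻¹ ^ (s + 1) := by
      rw [pow_succ, mul_assoc, hvu, mul_one]
    have e2 : u⁻¹ ^ (s + 1 + 1) * (X * d⁄dX ℂ u) = X * (u⁻¹ ^ (s + 2) * d⁄dX ℂ u) := by
      ring_nf
    rw [show s + 1 + 1 = s + 2 from rfl] at *
    rw [e1, e2, coeff_succ_X_mul]
    have hns : ((s : ℂ) + 1) ≠ 0 := Nat.cast_add_one_ne_zero s
    have hd : d⁄dX ℂ (u⁻¹ ^ (s + 1)) = -((s + 1) • (u⁻¹ ^ (s + 2) * d⁄dX ℂ u)) := by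
      rw [Derivation.leibniz_pow, deriv_inv' u hu]
      simp only [Nat.add_sub_cancel, smul_eq_mul, nsmul_eq_mul]
      push_cast
      ring
    have hc : coeff s (d⁄dX ℂ (u⁻¹ ^ (s + 1))) =
        coeff (s + 1) (u⁻¹ ^ (s + 1)) * (s + 1) := coeff_derivative _ _
    rw [hd, map_neg, map_nsmul, nsmul_eq_mul] at hc
    have h4 : ((s : ℂ) + 1) * coeff s (u⁻¹ ^ (s + 2) * d⁄dX ℂ u) =
        ((s : ℂ) + 1) * (-coeff (s + 1) (u⁻¹ ^ (s + 1))) := by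
      push_cast at hc ⊢
      linear_combination -hc
    have h5 := mul_left_cancel₀ hns h4
    rw [h5]
    ring

lemma coeff_pcomp_mul (φ : PowerSeries ℂ) (hφ : constantCoeff φ = 0)
    (g T : PowerSeries ℂ) (N : ℕ) :
    coeff N (pcomp φ g * T) =
      ∑ j ∈ Finset.range (N + 1), coeff j g * coeff N (φ ^ j * T) := by
  rw [coeff_mul]
  have step : ∀ x ∈ antidiagonal N, coeff x.1 (pcomp φ g) * coeff x.2 T =
      ∑ j ∈ Finset.range (N + 1), coeff j g * (coeff x.1 (φ ^ j) * coeff x.2 T) := by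
    intro x hx
    rw [Finset.HasAntidiagonal.mem_antidiagonal] at hx
    rw [coeff_pcomp_of_lt φ hφ g (Nat.lt_succ_of_le (le_of_add_le_left hx.le)), Finset.sum_mul]
    exact Finset.sum_congr rfl fun j _ => by ring
  rw [Finset.sum_congr rfl step, Finset.sum_comm]
  apply Finset.sum_congr rfl
  intro j _
  rw [coeff_mul, Finset.mul_sum]

/-- The residue change-of-variables lemma. -/
lemma resid_lemma (u : PowerSeries ℂ) (hu : constantCoeff u = 1)
    (g : PowerSeries ℂ) (N : ℕ) :
    coeff N (pcomp (X * u) g * (d⁄dX ℂ (X * u) * u⁻¹ ^ (N + 1))) = coeff N g := by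
  have hφ0 : constantCoeff (X * u) = 0 := by simp
  have hu0 : constantCoeff u ≠ 0 := by rw [hu]; exact one_ne_zero
  have huv : u * u⁻¹ = 1 := PowerSeries.mul_inv_cancel u hu0
  rw [coeff_pcomp_mul (X * u) hφ0]
  have term : ∀ j ∈ Finset.range (N + 1),
      coeff j g * coeff N ((X * u) ^ j * (d⁄dX ℂ (X * u) * u⁻¹ ^ (N + 1))) =
      coeff j g * (if j = N then 1 else 0) := by
    intro j hj
    rw [Finset.mem_range, Nat.lt_succ_iff] at hj
    congr 1
    have e1 : (X * u) ^ j * (d⁄dX ℂ (X * u) * u⁻¹ ^ (N + 1)) =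
        X ^ j * (u⁻¹ ^ (N - j + 1) * d⁄dX ℂ (X * u)) := by
      rw [mul_pow]
      have huj : u ^ j * u⁻¹ ^ (N + 1) = u⁻¹ ^ (N - j + 1) := by
        have hsplit : N + 1 = j + (N - j + 1) := by omega
        rw [hsplit, pow_add, ← mul_assoc, ← mul_pow, huv, one_pow, one_mul]
      calc X ^ j * u ^ j * (d⁄dX ℂ (X * u) * u⁻¹ ^ (N + 1))
          = X ^ j * ((u ^ j * u⁻¹ ^ (N + 1)) * d⁄dX ℂ (X * u)) := by ring
        _ = X ^ j * (u⁻¹ ^ (N - j + 1) * d⁄dX ℂ (X * u)) := by rw [huj]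
    rw [e1, coeff_X_pow_mul', if_pos hj, key_resid u hu (N - j)]
    by_cases hjN : j = N
    · rw [if_pos (by omega), if_pos hjN]
    · rw [if_neg (by omega), if_neg hjN]
  rw [Finset.sum_congr rfl term, Finset.sum_eq_single N]
  · rw [if_pos rfl, mul_one]
  · intro b _ hb; rw [if_neg hb, mul_zero]
  · intro hN; exact absurd (Finset.self_mem_range_succ N) hN

/-! ### Properties of `formalExp` -/

lemma coeff_formalExp (G : PowerSeries ℂ) (n : ℕ) :
    coeff n (formalExp G) = ∑ j ∈ Finset.range (n + 1), coeff n (G ^ j) / (j.factorial : ℂ) :=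
  coeff_mk _ _

lemma constantCoeff_formalExp (G : PowerSeries ℂ) : constantCoeff (formalExp G) = 1 := by
  rw [← coeff_zero_eq_constantCoeff, coeff_formalExp]
  simp

lemma deriv_formalExp (G : PowerSeries ℂ) (hG : constantCoeff G = 0) :
    d⁄dX ℂ (formalExp G) = d⁄dX ℂ G * formalExp G := by
  ext n
  have lhs : coeff n (d⁄dX ℂ (formalExp G)) =
      ∑ i ∈ Finset.range (n + 1), coeff n (G ^ i * d⁄dX ℂ G) / (i.factorial : ℂ) := by
    rw [coeff_derivative, coeff_formalExp, Finset.sum_mul, Finset.sum_range_succ']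
    have f0 : coeff (n+1) (G ^ 0) / ((Nat.factorial 0 : ℕ) : ℂ) * ((n:ℂ)+1) = 0 := by
      simp [coeff_one]
    rw [f0, add_zero]
    apply Finset.sum_congr rfl
    intro i _
    have hdpow : coeff (n + 1) (G ^ (i + 1)) * ((n:ℂ) + 1) =
        ((i:ℂ) + 1) * coeff n (G ^ i * d⁄dX ℂ G) := by
      have h1 : coeff n (d⁄dX ℂ (G ^ (i+1))) = coeff (n+1) (G ^ (i+1)) * ((n:ℂ)+1) := by
        rw [coeff_derivative]
      have h2 : d⁄dX ℂ (G ^ (i+1)) = (i+1) • (G ^ i * d⁄dX ℂ G) := by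
        rw [Derivation.leibniz_pow]
        simp only [Nat.add_sub_cancel, smul_eq_mul, nsmul_eq_mul]
      rw [h2, map_nsmul, nsmul_eq_mul] at h1
      rw [← h1]; push_cast; ring
    have hfac : (((i+1).factorial : ℕ) : ℂ) = ((i:ℂ) + 1) * ((i.factorial : ℕ) : ℂ) := by
      rw [Nat.factorial_succ]; push_cast; ring
    rw [div_mul_eq_mul_div, hdpow, hfac]
    have hi1 : ((i:ℂ) + 1) ≠ 0 := Nat.cast_add_one_ne_zero i
    exact mul_div_mul_left _ _ hi1
  rw [lhs, coeff_mul]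
  have step : ∀ x ∈ antidiagonal n, coeff x.1 (d⁄dX ℂ G) * coeff x.2 (formalExp G) =
      ∑ i ∈ Finset.range (n + 1),
        coeff x.1 (d⁄dX ℂ G) * (coeff x.2 (G ^ i) / (i.factorial : ℂ)) := by
    intro x hx
    rw [Finset.HasAntidiagonal.mem_antidiagonal] at hx
    rw [coeff_formalExp, Finset.mul_sum]
    apply Finset.sum_subset
    · exact Finset.range_subset_range.mpr (by omega)
    · intro i _ hi2
      rw [Finset.mem_range, not_lt] at hi2
      rw [coeff_pow_zero G hG (by omega : x.2 < i), zero_div, mul_zero]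
  rw [Finset.sum_congr rfl step, Finset.sum_comm]
  apply Finset.sum_congr rfl
  intro i _
  rw [mul_comm (G ^ i) (d⁄dX ℂ G), coeff_mul, Finset.sum_div]
  exact Finset.sum_congr rfl fun x _ => by rw [mul_div_assoc]

/-! ### Uniqueness for the first-order ODE -/

lemma ode_rec {Bs W : PowerSeries ℂ} (hW : X * d⁄dX ℂ W = W * Bs) (hB0 : coeff 0 Bs = 1)
    (n : ℕ) (hn : 1 ≤ n) :
    ((n : ℂ) - 1) * coeff n W = ∑ x ∈ (antidiagonal n).erase (n, 0),
      coeff x.1 W * coeff x.2 Bs := by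
  have h := congrArg (coeff n) hW
  obtain ⟨m, rfl⟩ : ∃ m, n = m + 1 := ⟨n - 1, by omega⟩
  rw [coeff_succ_X_mul, coeff_derivative, coeff_mul] at h
  have hmem : ((m+1 : ℕ), (0:ℕ)) ∈ antidiagonal (m+1) := by
    simp [Finset.HasAntidiagonal.mem_antidiagonal]
  rw [← Finset.add_sum_erase _ _ hmem, hB0, mul_one] at h
  push_cast
  linear_combination h

lemma ode_unique_s12 {Bs S T : PowerSeries ℂ} (hB0 : coeff 0 Bs = 1)
    (hS : X * d⁄dX ℂ S = S * Bs) (hT : X * d⁄dX ℂ T = T * Bs)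
    (h0 : coeff 0 S = coeff 0 T) (h1 : coeff 1 S = coeff 1 T) : S = T := by
  ext n
  induction n using Nat.strong_induction_on with
  | _ n ih =>
    match n, ih with
    | 0, _ => exact h0
    | 1, _ => exact h1
    | (m+2), ih =>
      have hne : ((m + 2 : ℕ) : ℂ) - 1 ≠ 0 := by
        have h2 : ((m + 2 : ℕ) : ℂ) - 1 = (m : ℂ) + 1 := by push_cast; ring
        rw [h2]
        exact Nat.cast_add_one_ne_zero m
      apply mul_left_cancel₀ hne
      rw [ode_rec hS hB0 (m+2) (by omega), ode_rec hT hB0 (m+2) (by omega)]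
      apply Finset.sum_congr rfl
      intro x hx
      obtain ⟨hxne, hxd⟩ := Finset.mem_erase.mp hx
      rw [Finset.HasAntidiagonal.mem_antidiagonal] at hxd
      have hx1 : x.1 < m + 2 := by
        rcases Nat.lt_or_ge x.1 (m+2) with h | h
        · exact h
        · exfalso; apply hxne
          have hq : x.1 = m + 2 := by omega
          have hx2 : x.2 = 0 := by omega
          exact Prod.ext hq hx2
      rw [ih x.1 hx1]

/-! ### Reduction from Laurent series data -/

lemma coe_coeff_neg (x : PowerSeries ℂ) {k : ℤ} (h : k < 0) :
    (HahnSeries.ofPowerSeries ℤ ℂ x).coeff k = 0 := by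
  rw [HahnSeries.ofPowerSeries_apply]
  apply HahnSeries.embDomain_of_notMem_range
  rintro ⟨n, hn⟩
  simp at hn
  omega

lemma F_eq (F : LaurentSeries ℂ) (hF : ∀ k < (-1 : ℤ), F.coeff k = 0) :
    F = HahnSeries.single (-1 : ℤ) (1 : ℂ) *
      ((PowerSeries.mk fun n => F.coeff ((n : ℤ) - 1) : PowerSeries ℂ) : LaurentSeries ℂ) := by
  ext k
  have key := HahnSeries.coeff_single_mul_add (r := (1 : ℂ))
    (x := ((PowerSeries.mk fun n => F.coeff ((n : ℤ) - 1) : PowerSeries ℂ) : LaurentSeries ℂ))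
    (a := k + 1) (b := -1)
  have hk : k + 1 + (-1 : ℤ) = k := by ring
  rw [hk, one_mul] at key
  rw [key]
  rcases le_or_gt 0 (k + 1) with h | h
  · obtain ⟨m, hm⟩ := Int.eq_ofNat_of_zero_le h
    rw [hm, LaurentSeries.coeff_coe_powerSeries, coeff_mk]
    congr 1
    omega
  · rw [show ((PowerSeries.mk fun n => F.coeff ((n : ℤ) - 1) : PowerSeries ℂ) : LaurentSeries ℂ) =
        HahnSeries.ofPowerSeries ℤ ℂ (PowerSeries.mk fun n => F.coeff ((n : ℤ) - 1)) from rfl,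
      coe_coeff_neg _ h, hF _ (by omega)]

lemma F_pow_eq (F : LaurentSeries ℂ) (hF : ∀ k < (-1 : ℤ), F.coeff k = 0) (k : ℕ) :
    F ^ k = HahnSeries.single (-(k : ℤ)) (1 : ℂ) *
      (((PowerSeries.mk fun n => F.coeff ((n : ℤ) - 1) : PowerSeries ℂ) ^ k : PowerSeries ℂ) :
        LaurentSeries ℂ) := by
  conv_lhs => rw [F_eq F hF]
  rw [mul_pow, HahnSeries.single_pow]
  congr 1
  · congr 1
    · simp
    · simp
  · exact (map_pow (HahnSeries.ofPowerSeries ℤ ℂ) _ k).symm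

lemma F_pow_coeff_neg_one (F : LaurentSeries ℂ) (hF : ∀ k < (-1 : ℤ), F.coeff k = 0) (m : ℕ) :
    (F ^ (m + 1)).coeff (-1) =
      coeff m ((PowerSeries.mk fun n => F.coeff ((n : ℤ) - 1) : PowerSeries ℂ) ^ (m + 1)) := by
  rw [F_pow_eq F hF (m + 1)]
  have key := HahnSeries.coeff_single_mul_add (r := (1 : ℂ))
    (x := (((PowerSeries.mk fun n => F.coeff ((n : ℤ) - 1) : PowerSeries ℂ) ^ (m+1) :
      PowerSeries ℂ) : LaurentSeries ℂ))
    (a := (m : ℤ)) (b := -((m + 1 : ℕ) : ℤ))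
  have hk : (m : ℤ) + (-((m + 1 : ℕ) : ℤ)) = -1 := by push_cast; ring
  rw [hk, one_mul] at key
  rw [key, LaurentSeries.coeff_coe_powerSeries]

lemma F_pow_coeff_zero (F : LaurentSeries ℂ) (hF : ∀ k < (-1 : ℤ), F.coeff k = 0) (k : ℕ) :
    (F ^ k).coeff 0 =
      coeff k ((PowerSeries.mk fun n => F.coeff ((n : ℤ) - 1) : PowerSeries ℂ) ^ k) := by
  rw [F_pow_eq F hF k]
  have key := HahnSeries.coeff_single_mul_add (r := (1 : ℂ))
    (x := (((PowerSeries.mk fun n => F.coeff ((n : ℤ) - 1) : PowerSeries ℂ) ^ k :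
      PowerSeries ℂ) : LaurentSeries ℂ))
    (a := (k : ℤ)) (b := -((k : ℕ) : ℤ))
  have hk : (k : ℤ) + (-((k : ℕ) : ℤ)) = 0 := by ring
  rw [hk, one_mul] at key
  rw [key, LaurentSeries.coeff_coe_powerSeries]

end LagrangeAux

open PowerSeries LagrangeAux in
/-- **Proposition (Lagrange-Bürmann form).** Let `f(y) = y^{−1} + ∑_{k≥0} f_k y^k` be a formal
Laurent series with complex coefficients, having at most a simple pole at `y = 0` with
residue `1` (encoded as `F : LaurentSeries ℂ` with `F.coeff k = 0` for `k < -1` and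
`F.coeff (-1) = 1`).  Then, as formal power series in `w`:
`w·exp(∑_{k≥1} (1/k)·([y^0] f^k)·w^k) = ∑_{k≥1} (1/k)·([y^{−1}] f^k)·w^k`. -/
theorem X_mul_formalExp_const_coeff_pow (F : LaurentSeries ℂ)
    (hF : ∀ k < (-1 : ℤ), F.coeff k = 0) (hF1 : F.coeff (-1) = 1) :
    PowerSeries.X * formalExp (PowerSeries.mk fun k =>
        if k = 0 then 0 else (k : ℂ)⁻¹ * (F ^ k).coeff 0) =
      PowerSeries.mk fun k => if k = 0 then 0 else (k : ℂ)⁻¹ * (F ^ k).coeff (-1) := by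
  set h : PowerSeries ℂ := PowerSeries.mk fun n => F.coeff ((n : ℤ) - 1) with hh
  have hh0 : constantCoeff h = 1 := by
    rw [← coeff_zero_eq_constantCoeff, hh, coeff_mk]
    norm_num [hF1]
  set φ : PowerSeries ℂ := Phi h with hphidef
  have hφ0 : constantCoeff φ = 0 := constantCoeff_Phi h
  set u : PowerSeries ℂ := pcomp φ h with hudef
  have hu1 : constantCoeff u = 1 := by rw [hudef, constantCoeff_pcomp, hh0]
  have hu0 : constantCoeff u ≠ 0 := by rw [hu1]; exact one_ne_zero
  have hfix : φ = X * u := Phi_eq h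
  have huv : u * u⁻¹ = 1 := PowerSeries.mul_inv_cancel u hu0
  -- Lagrange coefficient formula
  have D3 : ∀ m : ℕ, coeff m (h ^ (m+1)) = coeff (m+1) φ * ((m : ℂ) + 1) := by
    intro m
    have R := resid_lemma u hu1 (h ^ (m+1)) m
    rw [← hfix, pcomp_pow φ hφ0 h (m+1), ← hudef] at R
    have e : u ^ (m+1) * (d⁄dX ℂ φ * u⁻¹ ^ (m+1)) = d⁄dX ℂ φ := by
      calc u ^ (m+1) * (d⁄dX ℂ φ * u⁻¹ ^ (m+1)) = (u * u⁻¹) ^ (m+1) * d⁄dX ℂ φ := by ring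
        _ = d⁄dX ℂ φ := by rw [huv, one_pow, one_mul]
    rw [e] at R
    rw [← R, coeff_derivative]
  -- the logarithmic derivative series
  set Bs : PowerSeries ℂ := d⁄dX ℂ φ * u⁻¹ with hBs
  have D4 : ∀ k : ℕ, coeff k Bs = coeff k (h ^ k) := by
    intro k
    have R := resid_lemma u hu1 (h ^ k) k
    rw [← hfix, pcomp_pow φ hφ0 h k, ← hudef] at R
    have e : u ^ k * (d⁄dX ℂ φ * u⁻¹ ^ (k+1)) = Bs := by
      calc u ^ k * (d⁄dX ℂ φ * u⁻¹ ^ (k+1)) = (u * u⁻¹) ^ k * (d⁄dX ℂ φ * u⁻¹) := by ring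
        _ = Bs := by rw [huv, one_pow, one_mul, hBs]
    rw [e] at R
    exact R
  have hB0 : coeff 0 Bs = 1 := by
    rw [D4 0, pow_zero, coeff_zero_eq_constantCoeff, map_one]
  -- ODE for φ
  have hodeφ : X * d⁄dX ℂ φ = φ * Bs := by
    calc X * d⁄dX ℂ φ = X * d⁄dX ℂ φ * (u * u⁻¹) := by rw [huv, mul_one]
      _ = (X * u) * (d⁄dX ℂ φ * u⁻¹) := by ring
      _ = φ * Bs := by rw [← hfix, ← hBs]
  -- the exponent series
  set A : PowerSeries ℂ := PowerSeries.mk fun k =>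
    if k = 0 then 0 else (k : ℂ)⁻¹ * (F ^ k).coeff 0 with hA
  have hA0 : constantCoeff A = 0 := by
    rw [← coeff_zero_eq_constantCoeff, hA, coeff_mk, if_pos rfl]
  have hBseq : (1 : PowerSeries ℂ) + X * d⁄dX ℂ A = Bs := by
    ext k
    cases k with
    | zero =>
      have hB0' : constantCoeff Bs = 1 := by rw [← coeff_zero_eq_constantCoeff]; exact hB0
      simp only [map_add, coeff_zero_eq_constantCoeff, map_mul, map_one, constantCoeff_X,
        zero_mul, add_zero, hB0']
    | succ m =>
      rw [map_add, coeff_one, if_neg (Nat.succ_ne_zero m), zero_add, coeff_succ_X_mul,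
        coeff_derivative, hA, coeff_mk, if_neg (Nat.succ_ne_zero m), D4 (m+1),
        F_pow_coeff_zero F hF (m+1), ← hh]
      have hm1 : ((m+1 : ℕ) : ℂ) ≠ 0 := by
        push_cast
        exact Nat.cast_add_one_ne_zero m
      push_cast
      field_simp
  -- ODE for the left-hand side
  set E : PowerSeries ℂ := formalExp A with hE
  have hdE : d⁄dX ℂ E = d⁄dX ℂ A * E := deriv_formalExp A hA0
  have hodeP : X * d⁄dX ℂ (X * E) = (X * E) * Bs := by
    have hdP : d⁄dX ℂ (X * E) = X * (d⁄dX ℂ A * E) + E := by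
      rw [Derivation.leibniz, smul_eq_mul, smul_eq_mul, derivative_X, mul_one, hdE, add_comm]
    rw [hdP, ← hBseq]
    ring
  -- initial conditions
  have h0ST : coeff 0 (X * E) = coeff 0 φ := by
    rw [coeff_zero_eq_constantCoeff, map_mul, constantCoeff_X, zero_mul, hφ0]
  have h1ST : coeff 1 (X * E) = coeff 1 φ := by
    have e1 : coeff 1 (X * E) = coeff 0 E := coeff_succ_X_mul 0 E
    have e2 : coeff 1 φ = coeff 0 u := by
      rw [hfix]; exact coeff_succ_X_mul 0 u
    rw [e1, e2, coeff_zero_eq_constantCoeff, hu1, hE, constantCoeff_formalExp]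
  have hPφ : X * E = φ := ode_unique_s12 hB0 hodeP hodeφ h0ST h1ST
  -- conclude
  rw [hPφ]
  ext n
  cases n with
  | zero =>
    rw [coeff_mk, if_pos rfl, coeff_zero_eq_constantCoeff, hφ0]
  | succ m =>
    rw [coeff_mk, if_neg (Nat.succ_ne_zero m), F_pow_coeff_neg_one F hF m, ← hh, D3 m]
    have hm1 : ((m : ℂ) + 1) ≠ 0 := Nat.cast_add_one_ne_zero m
    push_cast
    field_simp
end
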